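/- Let X be an irreducible variety over an algebraically closed field and let G ⊆ Bir(X) be a subgroup that is also an algebraic subset (the image of a morphism from a variety). Then G is closed in Bir(X), and for every open dense subset U ⊆ G one has U ∘ U = G. -/

import Mathlib

open scoped Pointwise

/-- Key lemma: if `S` is a closed subset stable under multiplication and inversion
(e.g. a closed subgroup, or the closure of a subgroup), and `O ⊆ S` is open in `S`
and dense in `S`, then `S ⊆ O * O`. -/
lemma stmt17_key {𝔅 : Type*} [Group 𝔅] [TopologicalSpace 𝔅]
    (hmul_left : ∀ g : 𝔅, IsHomeomorph (fun x => g * x))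
    (hinv_homeo : IsHomeomorph (fun x : 𝔅 => x⁻¹))
    (S : Set 𝔅) (hScl : IsClosed S)
    (hmulS : ∀ a ∈ S, ∀ b ∈ S, a * b ∈ S) (hinvS : ∀ a ∈ S, a⁻¹ ∈ S)
    (O W : Set 𝔅) (hOS : O ⊆ S) (hW : IsOpen W) (hOW : O = W ∩ S)
    (hdense : S ⊆ closure O) : S ⊆ O * O := by
  intro h hh
  set f : 𝔅 → 𝔅 := fun x => h * x⁻¹ with hf_def
  have hf : IsHomeomorph f := (hmul_left h).comp hinv_homeo
  -- f maps S onto S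
  have hfS : ∀ a ∈ S, f a ∈ S := fun a ha => hmulS h hh a⁻¹ (hinvS a ha)
  -- O is nonempty
  have hOne : O.Nonempty := by
    rcases (mem_closure_iff_nhds.mp (hdense hh) Set.univ Filter.univ_mem) with ⟨x, hx⟩
    exact ⟨x, hx.2⟩
  -- V = f '' O is nonempty, contained in S, contained in the open set f '' W,
  -- and S ⊆ closure V
  obtain ⟨x₀, hx₀O⟩ := hOne
  have hVne : f x₀ ∈ f '' O := ⟨x₀, hx₀O, rfl⟩
  have hVS : ∀ y ∈ f '' O, y ∈ S := by
    rintro y ⟨a, haO, rfl⟩; exact hfS a (hOS haO)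
  have hfWopen : IsOpen (f '' W) := hf.isOpenMap W hW
  have hVW : f '' O ⊆ f '' W := Set.image_mono (f := f) (by rw [hOW]; exact Set.inter_subset_left)
  -- the point f x₀ lies in S ⊆ closure O and in the open set f '' W, so O meets f '' W
  have hfx₀S : f x₀ ∈ S := hVS _ hVne
  have hfx₀cl : f x₀ ∈ closure O := hdense hfx₀S
  obtain ⟨u, huW, huO⟩ :=
    mem_closure_iff_nhds.mp hfx₀cl (f '' W) (hfWopen.mem_nhds (hVW hVne))
  -- u ∈ O and u ∈ f '' W; since u ∈ S, in fact u ∈ f '' O... we need u = f v with v ∈ O.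
  -- From u ∈ f '' W: u = h * w⁻¹ with w ∈ W. Set v = (h⁻¹ * u)⁻¹ = u⁻¹ * h; then f v = u.
  obtain ⟨w, hwW, hwu⟩ := huW
  -- Need w ∈ O = W ∩ S. w ∈ W ✓. w ∈ S: w = u⁻¹ * h = (f u)... w = (h⁻¹ * u)⁻¹.
  have huS : u ∈ S := hOS huO
  have hw_eq : w = u⁻¹ * h := by
    rw [← hwu]
    simp [hf_def, mul_assoc]
  have hwS : w ∈ S := by
    rw [hw_eq]
    exact hmulS u⁻¹ (hinvS u huS) h hh
  have hwO : w ∈ O := by rw [hOW]; exact ⟨hwW, hwS⟩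
  have hhe : h = u * w := by rw [hw_eq]; simp [mul_assoc]
  rw [hhe]
  exact Set.mul_mem_mul huO hwO

theorem stmt17 {𝔅 : Type*} [Group 𝔅] [TopologicalSpace 𝔅]
    (IsAlg : Set 𝔅 → Prop)
    (hmul_left : ∀ g : 𝔅, IsHomeomorph (fun x => g * x))
    (hmul_right : ∀ g : 𝔅, IsHomeomorph (fun x => x * g))
    (hinv_homeo : IsHomeomorph (fun x : 𝔅 => x⁻¹))
    (hclosure : ∀ S, IsAlg S → IsAlg (closure S))
    (hconstr : ∀ S, IsAlg S → ∃ O : Set 𝔅, O ⊆ S ∧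
      (∃ W : Set 𝔅, IsOpen W ∧ O = W ∩ closure S) ∧ closure O = closure S)
    (G : Subgroup 𝔅) (hGalg : IsAlg (G : Set 𝔅)) :
    IsClosed (G : Set 𝔅) ∧
      ∀ U : Set 𝔅, U ⊆ (G : Set 𝔅) →
        (∃ W : Set 𝔅, IsOpen W ∧ U = W ∩ (G : Set 𝔅)) →
        (G : Set 𝔅) ⊆ closure U →
        U * U = (G : Set 𝔅) := by
  set H : Set 𝔅 := closure (G : Set 𝔅) with hH
  have hGH : (G : Set 𝔅) ⊆ H := subset_closure
  have hHcl : IsClosed H := isClosed_closure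
  -- H is stable under inversion
  have hinvH : ∀ a ∈ H, a⁻¹ ∈ H := by
    intro a ha
    have h1 : (fun x : 𝔅 => x⁻¹) '' H ⊆ closure ((fun x : 𝔅 => x⁻¹) '' (G : Set 𝔅)) :=
      image_closure_subset_closure_image hinv_homeo.continuous
    have h2 : (fun x : 𝔅 => x⁻¹) '' (G : Set 𝔅) ⊆ (G : Set 𝔅) := by
      rintro y ⟨b, hb, rfl⟩; exact G.inv_mem hb
    have := h1 ⟨a, ha, rfl⟩
    exact closure_mono h2 this
  -- step 1: g ∈ G, b ∈ H ⇒ g * b ∈ H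
  have hstep1 : ∀ g ∈ (G : Set 𝔅), ∀ b ∈ H, g * b ∈ H := by
    intro g hg b hb
    have h1 : (fun x : 𝔅 => g * x) '' H ⊆ closure ((fun x : 𝔅 => g * x) '' (G : Set 𝔅)) :=
      image_closure_subset_closure_image (hmul_left g).continuous
    have h2 : (fun x : 𝔅 => g * x) '' (G : Set 𝔅) ⊆ (G : Set 𝔅) := by
      rintro y ⟨b, hb, rfl⟩; exact G.mul_mem hg hb
    exact closure_mono h2 (h1 ⟨b, hb, rfl⟩)
  -- step 2: H stable under multiplication
  have hmulH : ∀ a ∈ H, ∀ b ∈ H, a * b ∈ H := by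
    intro a ha b hb
    have h1 : (fun x : 𝔅 => x * b) '' H ⊆ closure ((fun x : 𝔅 => x * b) '' (G : Set 𝔅)) :=
      image_closure_subset_closure_image (hmul_right b).continuous
    have h2 : (fun x : 𝔅 => x * b) '' (G : Set 𝔅) ⊆ H := by
      rintro y ⟨g, hg, rfl⟩; exact hstep1 g hg b hb
    have h3 := closure_mono h2 (h1 ⟨a, ha, rfl⟩)
    rwa [hHcl.closure_eq] at h3
  -- apply the key lemma to H with the open dense subset coming from `hconstr`
  obtain ⟨O, hOG, ⟨W, hWopen, hOW⟩, hOcl⟩ := hconstr (G : Set 𝔅) hGalg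
  have hOH : O ⊆ H := hOG.trans hGH
  have hHsub : H ⊆ O * O :=
    stmt17_key hmul_left hinv_homeo H hHcl hmulH hinvH O W hOH hWopen hOW
      (by rw [hOcl])
  have hOOG : O * O ⊆ (G : Set 𝔅) := by
    rintro x ⟨a, ha, b, hb, rfl⟩
    exact G.mul_mem (hOG ha) (hOG hb)
  have hGclosed : IsClosed (G : Set 𝔅) := by
    have : H ⊆ (G : Set 𝔅) := hHsub.trans hOOG
    have hHG : H = (G : Set 𝔅) := Set.Subset.antisymm this hGH
    rw [← hHG]; exact hHcl
  refine ⟨hGclosed, ?_⟩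
  intro U hUG ⟨W', hW'open, hUW'⟩ hUdense
  have hGmul : ∀ a ∈ (G : Set 𝔅), ∀ b ∈ (G : Set 𝔅), a * b ∈ (G : Set 𝔅) :=
    fun a ha b hb => G.mul_mem ha hb
  have hGinv : ∀ a ∈ (G : Set 𝔅), a⁻¹ ∈ (G : Set 𝔅) := fun a ha => G.inv_mem ha
  have hGsub : (G : Set 𝔅) ⊆ U * U :=
    stmt17_key hmul_left hinv_homeo (G : Set 𝔅) hGclosed hGmul hGinv U W' hUG
      hW'open hUW' hUdense
  have hsub : U * U ⊆ (G : Set 𝔅) := by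
    rintro x ⟨a, ha, b, hb, rfl⟩
    exact G.mul_mem (hUG ha) (hUG hb)
  exact Set.Subset.antisymm hsub hGsub
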